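/- For every f in the Schwartz space on ℝ and every α ∈ ℝ, one has ∫ |(f(α) − f(β))/(α − β)|² dβ ≤ C ‖f'‖_{L²}² for a universal constant C. -/

import Mathlib

open MeasureTheory Set Filter
open scoped ENNReal NNReal

-- helper 1: substitution
private lemma lint_affine {h : ℝ → ℝ≥0∞} (hm : Measurable h) {t : ℝ} (ht : 0 < t) (c : ℝ) :
    ∫⁻ β : ℝ, h (t * β + c) = ENNReal.ofReal t⁻¹ * ∫⁻ x, h x := by
  have h1 : ∫⁻ β : ℝ, h (t * β + c) = ∫⁻ β : ℝ, (fun x => h (x + c)) (t * β) := rfl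
  have hm' : Measurable fun x : ℝ => h (x + c) := hm.comp (measurable_add_const c)
  rw [h1, ← lintegral_map hm' (measurable_const_mul t), Real.map_volume_mul_left ht.ne',
    lintegral_smul_measure, lintegral_add_right_eq_self (fun x => h x) c, abs_of_pos
      (inv_pos.mpr ht), smul_eq_mul]

-- helper 2
private lemma lint_rpow_half :
    ∫⁻ t in Ioc (0:ℝ) 1, ENNReal.ofReal (t ^ (-(1/2) : ℝ)) = ENNReal.ofReal 2 := by
  have hint : IntegrableOn (fun t : ℝ => t ^ (-(1/2) : ℝ)) (Ioc 0 1) := by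
    rw [← intervalIntegrable_iff_integrableOn_Ioc_of_le zero_le_one]
    exact intervalIntegral.intervalIntegrable_rpow' (by norm_num)
  rw [← ofReal_integral_eq_lintegral_ofReal hint]
  · congr 1
    rw [← intervalIntegral.integral_of_le zero_le_one]
    rw [integral_rpow (Or.inl (by norm_num))]
    rw [Real.zero_rpow (by norm_num), Real.one_rpow]
    norm_num
  · filter_upwards [ae_restrict_mem measurableSet_Ioc] with t ht
    exact Real.rpow_nonneg ht.1.le _

-- helper 3: FTC representation
private lemma ftc_rep (f : SchwartzMap ℝ ℂ) (α β : ℝ) (hβ : β ≠ α) :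
    (f α - f β) / ((α - β : ℝ) : ℂ) = ∫ t in (0:ℝ)..1, deriv f (α + t * (β - α)) := by
  have hd : ∀ t ∈ uIcc (0:ℝ) 1, HasDerivAt (fun s => f (α + s * (β - α)))
      ((β - α) • deriv f (α + t * (β - α))) t := by
    intro t _
    have hL : HasDerivAt (fun s : ℝ => α + s * (β - α)) (β - α) t := by
      simpa using ((hasDerivAt_id t).mul_const (β - α)).const_add α
    exact (f.differentiableAt.hasDerivAt).scomp t hL
  have hci : IntervalIntegrable (fun t => (β - α) • deriv f (α + t * (β - α))) volume 0 1 := by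
    apply Continuous.intervalIntegrable
    have : Continuous (deriv (⇑f)) := by
      have := (SchwartzMap.derivCLM ℝ ℂ f).continuous
      exact this.congr fun x => by simp [SchwartzMap.derivCLM_apply]
    exact (this.comp (by fun_prop : Continuous fun t : ℝ => α + t * (β - α))).const_smul (β - α)
  have key := intervalIntegral.integral_eq_sub_of_hasDerivAt hd hci
  simp only [one_mul, zero_mul, add_zero] at key
  rw [intervalIntegral.integral_smul, show α + (β - α) = β by ring] at key
  have hne : (β - α : ℝ) ≠ 0 := sub_ne_zero.mpr hβ
  have hne' : ((β - α : ℝ) : ℂ) ≠ 0 := by exact_mod_cast hne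
  have key' : ((β - α : ℝ) : ℂ) * ∫ t in (0:ℝ)..1, deriv f (α + t * (β - α))
      = f β - f α := by simpa [Complex.real_smul] using key
  have hI : ∫ t in (0:ℝ)..1, deriv f (α + t * (β - α))
      = (f β - f α) / ((β - α : ℝ) : ℂ) := by
    rw [eq_div_iff hne', mul_comm]; exact key'
  rw [hI, show ((α - β : ℝ) : ℂ) = -((β - α : ℝ) : ℂ) by push_cast; ring,
    div_neg, ← neg_div, neg_sub]

private lemma pointwise_bound (f : SchwartzMap ℝ ℂ) (α β : ℝ) (hβ : β ≠ α) :
    (‖(f α - f β) / ((α - β : ℝ) : ℂ)‖₊ : ℝ≥0∞) ^ 2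
      ≤ ENNReal.ofReal 2 * ∫⁻ t in Ioc (0:ℝ) 1,
          ENNReal.ofReal (t ^ ((1/2) : ℝ)) * (‖deriv f (α + t * (β - α))‖₊ : ℝ≥0∞) ^ 2 := by
  have hDc : Continuous (deriv (⇑f)) := by
    have := (SchwartzMap.derivCLM ℝ ℂ f).continuous
    exact this.congr fun x => by simp [SchwartzMap.derivCLM_apply]
  set D := deriv (⇑f) with hD
  set h : ℝ → ℂ := fun t => D (α + t * (β - α)) with hh
  have hhc : Continuous h := hDc.comp (by continuity)
  set B : ℝ≥0∞ := ∫⁻ t in Ioc (0:ℝ) 1,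
      ENNReal.ofReal (t ^ ((1/2) : ℝ)) * (‖h t‖₊ : ℝ≥0∞) ^ 2 with hB
  have step1 : (‖(f α - f β) / ((α - β : ℝ) : ℂ)‖₊ : ℝ≥0∞)
      ≤ ∫⁻ t in Ioc (0:ℝ) 1, (‖h t‖₊ : ℝ≥0∞) := by
    rw [ftc_rep f α β hβ, intervalIntegral.integral_of_le zero_le_one]
    exact enorm_integral_le_lintegral_enorm _
  set F : ℝ → ℝ≥0∞ := fun t => ENNReal.ofReal (t ^ (-(1/4) : ℝ)) with hF
  set G : ℝ → ℝ≥0∞ := fun t => ENNReal.ofReal (t ^ ((1/4) : ℝ)) * (‖h t‖₊ : ℝ≥0∞) with hG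
  have hFm : Measurable F := by
    measurability
  have hGm : Measurable G := by
    refine Measurable.mul (f := fun t => ENNReal.ofReal (t ^ ((1/4) : ℝ)))
      (g := fun t => (‖h t‖₊ : ℝ≥0∞)) ?_ ?_
    · measurability
    · exact (measurable_coe_nnreal_ennreal.comp hhc.measurable.nnnorm)
  have step2 : ∫⁻ t in Ioc (0:ℝ) 1, (‖h t‖₊ : ℝ≥0∞)
      = ∫⁻ t in Ioc (0:ℝ) 1, (F * G) t := by
    refine lintegral_congr_ae ?_
    filter_upwards [ae_restrict_mem measurableSet_Ioc] with t ht
    simp only [Pi.mul_apply, hF, hG]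
    rw [← mul_assoc, ← ENNReal.ofReal_mul (Real.rpow_nonneg ht.1.le _),
      ← Real.rpow_add ht.1]
    norm_num
  have conj : Real.HolderConjugate 2 2 := Real.HolderConjugate.two_two
  have holder := ENNReal.lintegral_mul_le_Lp_mul_Lq (volume.restrict (Ioc (0:ℝ) 1)) conj
    hFm.aemeasurable hGm.aemeasurable
  have hFsq : ∫⁻ t in Ioc (0:ℝ) 1, F t ^ (2:ℝ) = ENNReal.ofReal 2 := by
    rw [← lint_rpow_half]
    refine lintegral_congr_ae ?_
    filter_upwards [ae_restrict_mem measurableSet_Ioc] with t ht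
    rw [hF]
    rw [ENNReal.ofReal_rpow_of_nonneg (Real.rpow_nonneg ht.1.le _) (by norm_num),
      ← Real.rpow_mul ht.1.le]
    norm_num
  have hGsq : ∫⁻ t in Ioc (0:ℝ) 1, G t ^ (2:ℝ) = B := by
    rw [hB]
    refine lintegral_congr_ae ?_
    filter_upwards [ae_restrict_mem measurableSet_Ioc] with t ht
    rw [hG]
    rw [ENNReal.mul_rpow_of_nonneg _ _ (by norm_num : (0:ℝ) ≤ 2),
      ENNReal.ofReal_rpow_of_nonneg (Real.rpow_nonneg ht.1.le _) (by norm_num),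
      ← Real.rpow_mul ht.1.le,
      show (2:ℝ) = ((2:ℕ):ℝ) by norm_num, ENNReal.rpow_natCast]
    norm_num
  rw [hFsq, hGsq] at holder
  rw [← step2] at holder
  have step3 : (‖(f α - f β) / ((α - β : ℝ) : ℂ)‖₊ : ℝ≥0∞)
      ≤ (ENNReal.ofReal 2) ^ (1/2 : ℝ) * B ^ (1/2 : ℝ) := step1.trans holder
  calc (‖(f α - f β) / ((α - β : ℝ) : ℂ)‖₊ : ℝ≥0∞) ^ 2
      ≤ ((ENNReal.ofReal 2) ^ (1/2 : ℝ) * B ^ (1/2 : ℝ)) ^ 2 :=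
        pow_le_pow_left₀ (by positivity) step3 2
    _ = ENNReal.ofReal 2 * B := by
        rw [mul_pow, ← ENNReal.rpow_natCast ((ENNReal.ofReal 2) ^ (1/2:ℝ)) 2,
          ← ENNReal.rpow_natCast (B ^ (1/2:ℝ)) 2, ← ENNReal.rpow_mul, ← ENNReal.rpow_mul]
        norm_num

private lemma key_lint (f : SchwartzMap ℝ ℂ) (α : ℝ) :
    ∫⁻ β : ℝ, (‖(f α - f β) / ((α - β : ℝ) : ℂ)‖₊ : ℝ≥0∞) ^ 2
      ≤ ENNReal.ofReal 4 * ∫⁻ x : ℝ, (‖deriv (⇑f) x‖₊ : ℝ≥0∞) ^ 2 := by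
  have hDc : Continuous (deriv (⇑f)) := by
    have := (SchwartzMap.derivCLM ℝ ℂ f).continuous
    exact this.congr fun x => by simp [SchwartzMap.derivCLM_apply]
  set D := deriv (⇑f) with hD
  set I : ℝ≥0∞ := ∫⁻ x : ℝ, (‖D x‖₊ : ℝ≥0∞) ^ 2 with hI_def
  by_cases hI : I = ⊤
  · rw [hI, ENNReal.mul_top (by simp)]; exact le_top
  have hDm : Measurable fun x : ℝ => (‖D x‖₊ : ℝ≥0∞) ^ 2 :=
    (measurable_coe_nnreal_ennreal.comp hDc.measurable.nnnorm).pow_const 2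
  have hae : ∀ᵐ β : ℝ, β ≠ α := by
    rw [ae_iff]
    simpa using measure_singleton α
  have step1 : ∫⁻ β : ℝ, (‖(f α - f β) / ((α - β : ℝ) : ℂ)‖₊ : ℝ≥0∞) ^ 2
      ≤ ∫⁻ β : ℝ, ENNReal.ofReal 2 * ∫⁻ t in Ioc (0:ℝ) 1,
          ENNReal.ofReal (t ^ ((1/2) : ℝ)) * (‖D (α + t * (β - α))‖₊ : ℝ≥0∞) ^ 2 :=
    lintegral_mono_ae (hae.mono fun β hβ => pointwise_bound f α β hβ)
  have step2 : ∫⁻ β : ℝ, ENNReal.ofReal 2 * ∫⁻ t in Ioc (0:ℝ) 1,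
          ENNReal.ofReal (t ^ ((1/2) : ℝ)) * (‖D (α + t * (β - α))‖₊ : ℝ≥0∞) ^ 2
      = ENNReal.ofReal 2 * ∫⁻ β : ℝ, ∫⁻ t in Ioc (0:ℝ) 1,
          ENNReal.ofReal (t ^ ((1/2) : ℝ)) * (‖D (α + t * (β - α))‖₊ : ℝ≥0∞) ^ 2 :=
    lintegral_const_mul' _ _ ENNReal.ofReal_ne_top
  have hΦ : Measurable (Function.uncurry fun (β t : ℝ) =>
      ENNReal.ofReal (t ^ ((1/2) : ℝ)) * (‖D (α + t * (β - α))‖₊ : ℝ≥0∞) ^ 2) := by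
    have h1 : Measurable fun p : ℝ × ℝ => ENNReal.ofReal (p.2 ^ ((1/2) : ℝ)) := by
      measurability
    have h2 : Measurable fun p : ℝ × ℝ => D (α + p.2 * (p.1 - α)) :=
      hDc.measurable.comp (by measurability)
    exact h1.mul ((measurable_coe_nnreal_ennreal.comp h2.nnnorm).pow_const 2)
  have step3 : ∫⁻ β : ℝ, ∫⁻ t in Ioc (0:ℝ) 1,
          ENNReal.ofReal (t ^ ((1/2) : ℝ)) * (‖D (α + t * (β - α))‖₊ : ℝ≥0∞) ^ 2
      = ∫⁻ t in Ioc (0:ℝ) 1, ∫⁻ β : ℝ,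
          ENNReal.ofReal (t ^ ((1/2) : ℝ)) * (‖D (α + t * (β - α))‖₊ : ℝ≥0∞) ^ 2 :=
    lintegral_lintegral_swap hΦ.aemeasurable
  have step4 : ∫⁻ t in Ioc (0:ℝ) 1, ∫⁻ β : ℝ,
          ENNReal.ofReal (t ^ ((1/2) : ℝ)) * (‖D (α + t * (β - α))‖₊ : ℝ≥0∞) ^ 2
      = ∫⁻ t in Ioc (0:ℝ) 1, ENNReal.ofReal (t ^ (-(1/2) : ℝ)) * I := by
    refine lintegral_congr_ae ?_
    filter_upwards [ae_restrict_mem measurableSet_Ioc] with t ht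
    have harg : ∀ β : ℝ, α + t * (β - α) = t * β + (α - t * α) := fun β => by ring
    calc ∫⁻ β : ℝ, ENNReal.ofReal (t ^ ((1/2) : ℝ)) * (‖D (α + t * (β - α))‖₊ : ℝ≥0∞) ^ 2
        = ENNReal.ofReal (t ^ ((1/2) : ℝ)) * ∫⁻ β : ℝ, (‖D (t * β + (α - t * α))‖₊ : ℝ≥0∞) ^ 2 := by
          simp_rw [harg]
          exact lintegral_const_mul' _ _ ENNReal.ofReal_ne_top
      _ = ENNReal.ofReal (t ^ ((1/2) : ℝ)) * (ENNReal.ofReal t⁻¹ * I) := by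
          rw [lint_affine hDm ht.1]
      _ = ENNReal.ofReal (t ^ (-(1/2) : ℝ)) * I := by
          rw [← mul_assoc, ← ENNReal.ofReal_mul (Real.rpow_nonneg ht.1.le _),
            ← Real.rpow_neg_one t, ← Real.rpow_add ht.1]
          norm_num
  have step5 : ∫⁻ t in Ioc (0:ℝ) 1, ENNReal.ofReal (t ^ (-(1/2) : ℝ)) * I
      = ENNReal.ofReal 2 * I := by
    rw [lintegral_mul_const' _ _ hI, lint_rpow_half]
  calc ∫⁻ β : ℝ, (‖(f α - f β) / ((α - β : ℝ) : ℂ)‖₊ : ℝ≥0∞) ^ 2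
      ≤ ENNReal.ofReal 2 * (ENNReal.ofReal 2 * I) := by
        rw [← step5, ← step4, ← step3]; exact step1.trans_eq step2
    _ = ENNReal.ofReal 4 * I := by
        rw [← mul_assoc, ← ENNReal.ofReal_mul (by norm_num)]
        norm_num

/-- For Schwartz `f` and every `α`,
`∫ |(f(α) − f(β))/(α − β)|² dβ ≤ C ‖f'‖_{L²}²` for a universal constant `C`. -/
theorem difference_quotient_sq_integral_bound :
    ∃ C : ℝ, 0 < C ∧ ∀ f : SchwartzMap ℝ ℂ, ∀ α : ℝ,
      (∫ β : ℝ, ‖(f α - f β) / (((α - β : ℝ)) : ℂ)‖ ^ 2)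
        ≤ C * ∫ x : ℝ, ‖deriv (⇑f) x‖ ^ 2 := by
  refine ⟨4, by norm_num, fun f α => ?_⟩
  have hDc : Continuous (deriv (⇑f)) := by
    have := (SchwartzMap.derivCLM ℝ ℂ f).continuous
    exact this.congr fun x => by simp [SchwartzMap.derivCLM_apply]
  set D := deriv (⇑f) with hD
  -- measurability of the difference quotient
  have hgm : Measurable fun β : ℝ => (f α - f β) / ((α - β : ℝ) : ℂ) := by
    apply Measurable.div
    · exact measurable_const.sub f.continuous.measurable
    · exact (Complex.continuous_ofReal.comp (continuous_const.sub continuous_id)).measurable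
  -- integrability of ‖D‖²
  have hbound : ∀ x : ℝ, ‖D x‖ ≤ SchwartzMap.seminorm ℝ 0 0 (SchwartzMap.derivCLM ℝ ℂ f) := by
    intro x
    have := (SchwartzMap.derivCLM ℝ ℂ f).norm_le_seminorm ℝ x
    simpa [SchwartzMap.derivCLM_apply] using this
  have hInt : Integrable (fun x : ℝ => ‖D x‖ ^ 2) := by
    refine Integrable.mono' (((SchwartzMap.derivCLM ℝ ℂ f).integrable.norm).const_mul
      (SchwartzMap.seminorm ℝ 0 0 (SchwartzMap.derivCLM ℝ ℂ f))) ?_ ?_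
    · exact (hDc.norm.pow 2).aestronglyMeasurable
    · refine Eventually.of_forall fun x => ?_
      rw [Real.norm_eq_abs, abs_of_nonneg (by positivity), sq]
      have : ‖(SchwartzMap.derivCLM ℝ ℂ f) x‖ = ‖D x‖ := by
        simp [SchwartzMap.derivCLM_apply, hD]
      rw [this]
      exact mul_le_mul_of_nonneg_right (hbound x) (norm_nonneg _)
  have hL : ∫ β : ℝ, ‖(f α - f β) / ((α - β : ℝ) : ℂ)‖ ^ 2
      = (∫⁻ β : ℝ, (‖(f α - f β) / ((α - β : ℝ) : ℂ)‖₊ : ℝ≥0∞) ^ 2).toReal := by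
    rw [integral_eq_lintegral_of_nonneg_ae (Eventually.of_forall fun β => by positivity)
      ((hgm.norm.pow_const 2).aestronglyMeasurable)]
    congr 1
    refine lintegral_congr fun β => ?_
    rw [ENNReal.ofReal_pow (norm_nonneg _), ofReal_norm, enorm_eq_nnnorm]
  have hR : ∫ x : ℝ, ‖D x‖ ^ 2 = (∫⁻ x : ℝ, (‖D x‖₊ : ℝ≥0∞) ^ 2).toReal := by
    rw [integral_eq_lintegral_of_nonneg_ae (Eventually.of_forall fun x => by positivity)
      ((by fun_prop : Continuous fun x => ‖D x‖ ^ 2).aestronglyMeasurable)]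
    congr 1
    refine lintegral_congr fun x => ?_
    rw [ENNReal.ofReal_pow (norm_nonneg _), ofReal_norm, enorm_eq_nnnorm]
  have hIfin : (∫⁻ x : ℝ, (‖D x‖₊ : ℝ≥0∞) ^ 2) ≠ ⊤ := by
    have := hInt.lintegral_lt_top
    rw [show (fun x : ℝ => ENNReal.ofReal (‖D x‖ ^ 2))
        = fun x : ℝ => (‖D x‖₊ : ℝ≥0∞) ^ 2 from funext fun x => by
      rw [ENNReal.ofReal_pow (norm_nonneg _), ofReal_norm, enorm_eq_nnnorm]] at this
    exact this.ne
  rw [hL, hR]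
  have hkey := key_lint f α
  calc (∫⁻ β : ℝ, (‖(f α - f β) / ((α - β : ℝ) : ℂ)‖₊ : ℝ≥0∞) ^ 2).toReal
      ≤ (ENNReal.ofReal 4 * ∫⁻ x : ℝ, (‖D x‖₊ : ℝ≥0∞) ^ 2).toReal :=
        ENNReal.toReal_mono (ENNReal.mul_ne_top ENNReal.ofReal_ne_top hIfin) hkey
    _ = 4 * (∫⁻ x : ℝ, (‖D x‖₊ : ℝ≥0∞) ^ 2).toReal := by
        rw [ENNReal.toReal_mul, ENNReal.toReal_ofReal (by norm_num)]
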